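/- Consider the hybrid setup, with λ_min > 0 and M := max(1−δ, e^{−λ_min}) ∈ (0,1). Then for every n ≥ 0 and every t ∈ [a_n, b_n], ‖ε_n(t)‖ ≤ ‖ε_0(a_0)‖ · exp(𝓛·M^{−1}·(∑_{j=0}^{n−1}(b_j−a_j) + (t−a_n))) · M^{∑_{j=0}^{n−1}∫_{a_j}^{b_j} γ(s) ds + ∫_{a_n}^{t} γ(s) ds} · (M + μ*·𝓛)^n. -/

import Mathlib

open scoped RealInnerProductSpace

lemma hinner_sum {N : ℕ} (bb : OrthonormalBasis (Fin N) ℝ (EuclideanSpace ℝ (Fin N)))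
    (x y : EuclideanSpace ℝ (Fin N)) :
    ⟪x, y⟫ = ∑ i, bb.repr x i * bb.repr y i := by
  have h1 := (bb.repr.inner_map_map x y).symm
  have h2 : ⟪bb.repr x, bb.repr y⟫ = ∑ i, bb.repr x i * bb.repr y i := by
    rw [PiLp.inner_apply]
    simp only [RCLike.inner_apply, starRingEnd_apply, star_trivial]
    exact Finset.sum_congr rfl (fun i _ => mul_comm _ _)
  exact h1.trans h2

lemma heig {N : ℕ} {B : Matrix (Fin N) (Fin N) ℝ} (hB : B.IsHermitian) (i : Fin N) :
    Matrix.toEuclideanCLM (𝕜 := ℝ) (n := Fin N) B (hB.eigenvectorBasis i)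
      = hB.eigenvalues i • hB.eigenvectorBasis i :=
  congrArg (WithLp.equiv 2 (Fin N → ℝ)).symm (hB.mulVec_eigenvectorBasis i)

lemma hrepr {N : ℕ} {B : Matrix (Fin N) (Fin N) ℝ} (hB : B.IsHermitian)
    (x : EuclideanSpace ℝ (Fin N)) (i : Fin N) :
    hB.eigenvectorBasis.repr (Matrix.toEuclideanCLM (𝕜 := ℝ) (n := Fin N) B x) i
      = hB.eigenvalues i * hB.eigenvectorBasis.repr x i := by
  have hsym := (Matrix.isHermitian_iff_isSymmetric.mp hB)
  rw [OrthonormalBasis.repr_apply_apply, OrthonormalBasis.repr_apply_apply]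
  have h1 : ⟪hB.eigenvectorBasis i, Matrix.toEuclideanCLM (𝕜 := ℝ) (n := Fin N) B x⟫
      = ⟪Matrix.toEuclideanCLM (𝕜 := ℝ) (n := Fin N) B (hB.eigenvectorBasis i), x⟫ :=
    (hsym (hB.eigenvectorBasis i) x).symm
  rw [h1, heig hB i, real_inner_smul_left]

lemma norm_sq_sum {N : ℕ} (bb : OrthonormalBasis (Fin N) ℝ (EuclideanSpace ℝ (Fin N)))
    (x : EuclideanSpace ℝ (Fin N)) : ‖x‖ ^ 2 = ∑ i, bb.repr x i ^ 2 := by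
  rw [← real_inner_self_eq_norm_sq, hinner_sum bb]
  simp [sq]

lemma rayleigh' {N : ℕ} {B : Matrix (Fin N) (Fin N) ℝ} (hB : B.IsHermitian) {lmin : ℝ}
    (hmin_le : ∀ i, lmin ≤ hB.eigenvalues i) (x : EuclideanSpace ℝ (Fin N)) :
    lmin * ‖x‖ ^ 2 ≤ ⟪x, Matrix.toEuclideanCLM (𝕜 := ℝ) (n := Fin N) B x⟫ := by
  rw [hinner_sum hB.eigenvectorBasis, norm_sq_sum hB.eigenvectorBasis, Finset.mul_sum]
  apply Finset.sum_le_sum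
  intro i _
  rw [hrepr hB x i]
  have h1 : lmin * hB.eigenvectorBasis.repr x i ^ 2
      ≤ hB.eigenvalues i * hB.eigenvectorBasis.repr x i ^ 2 :=
    mul_le_mul_of_nonneg_right (hmin_le i) (sq_nonneg _)
  nlinarith [sq_nonneg (hB.eigenvectorBasis.repr x i)]

lemma jump_op {N : ℕ} {B : Matrix (Fin N) (Fin N) ℝ} (hB : B.IsHermitian) {c δ : ℝ}
    (hδ1 : δ < 1) (hc : ∀ i, δ ≤ c * hB.eigenvalues i ∧ c * hB.eigenvalues i < 1)
    (x : EuclideanSpace ℝ (Fin N)) :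
    ‖Matrix.toEuclideanCLM (𝕜 := ℝ) (n := Fin N) (1 - c • B) x‖ ≤ (1 - δ) * ‖x‖ := by
  have hmap : Matrix.toEuclideanCLM (𝕜 := ℝ) (n := Fin N) (1 - c • B) x
      = x - c • Matrix.toEuclideanCLM (𝕜 := ℝ) (n := Fin N) B x := by
    simp [map_sub, map_smul]
  have hsq : ‖Matrix.toEuclideanCLM (𝕜 := ℝ) (n := Fin N) (1 - c • B) x‖ ^ 2
      ≤ ((1 - δ) * ‖x‖) ^ 2 := by
    rw [norm_sq_sum hB.eigenvectorBasis, mul_pow, norm_sq_sum hB.eigenvectorBasis x,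
      Finset.mul_sum]
    apply Finset.sum_le_sum
    intro i _
    rw [hmap]
    have : hB.eigenvectorBasis.repr (x - c • Matrix.toEuclideanCLM (𝕜 := ℝ) (n := Fin N) B x) i
        = (1 - c * hB.eigenvalues i) * hB.eigenvectorBasis.repr x i := by
      rw [map_sub, map_smul]
      simp only [PiLp.sub_apply, PiLp.smul_apply, smul_eq_mul, hrepr hB x i]
      ring
    rw [this, mul_pow]
    have h1 := (hc i).1
    have h2 := (hc i).2
    have hb1 : (1 - c * hB.eigenvalues i) ^ 2 ≤ (1 - δ) ^ 2 := by nlinarith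
    exact mul_le_mul_of_nonneg_right hb1 (sq_nonneg _)
  have := Real.sqrt_le_sqrt hsq
  rwa [Real.sqrt_sq (norm_nonneg _), Real.sqrt_sq (by nlinarith [norm_nonneg x])] at this

lemma gronwall_core {N : ℕ} {B : Matrix (Fin N) (Fin N) ℝ} (hB : B.IsHermitian) {lmin : ℝ}
    (hmin_le : ∀ i, lmin ≤ hB.eigenvalues i)
    {γ : ℝ → ℝ} (hγc : Continuous γ) (hγ0 : ∀ t, 0 ≤ γ t)
    {L : ℝ} (f g : ℝ → EuclideanSpace ℝ (Fin N)) (A Bt : ℝ)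
    (hode : ∀ t ∈ Set.Icc A Bt,
      HasDerivAt f (-(γ t) • (Matrix.toEuclideanCLM (𝕜 := ℝ) (n := Fin N) B (f t)) + g t) t)
    (hg : ∀ t ∈ Set.Icc A Bt, ‖g t‖ ≤ L * ‖f t‖) :
    ∀ t ∈ Set.Icc A Bt,
      ‖f t‖ ≤ ‖f A‖ * Real.exp (L * (t - A) - lmin * ∫ s in A..t, γ s) := by
  intro t ht
  set G : ℝ → ℝ := fun u => ∫ s in A..u, γ s with hGdef
  set E : ℝ → ℝ := fun u => 2 * lmin * G u - 2 * L * (u - A) with hEdef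
  set ψ : ℝ → ℝ := fun u => ⟪f u, f u⟫ * Real.exp (E u) with hψdef
  have hG : ∀ u, HasDerivAt G (γ u) u := fun u =>
    (hγc.integral_hasStrictDerivAt A u).hasDerivAt
  have hE : ∀ u, HasDerivAt E (2 * lmin * γ u - 2 * L) u := by
    intro u
    have h1 : HasDerivAt (fun v => 2 * lmin * G v) (2 * lmin * γ u) u := (hG u).const_mul _
    have h2 : HasDerivAt (fun v => 2 * L * (v - A)) (2 * L) u := by
      simpa using ((hasDerivAt_id u).sub_const A).const_mul (2 * L)
    exact h1.sub h2
  have hψ : ∀ u ∈ Set.Icc A Bt, HasDerivAt ψ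
      ((⟪f u, -(γ u) • (Matrix.toEuclideanCLM (𝕜 := ℝ) (n := Fin N) B (f u)) + g u⟫
        + ⟪-(γ u) • (Matrix.toEuclideanCLM (𝕜 := ℝ) (n := Fin N) B (f u)) + g u, f u⟫)
          * Real.exp (E u)
        + ⟪f u, f u⟫ * (Real.exp (E u) * (2 * lmin * γ u - 2 * L))) u := by
    intro u hu
    exact (HasDerivAt.inner ℝ (hode u hu) (hode u hu)).mul ((hE u).exp)
  have hder_le : ∀ u ∈ Set.Icc A Bt,
      (⟪f u, -(γ u) • (Matrix.toEuclideanCLM (𝕜 := ℝ) (n := Fin N) B (f u)) + g u⟫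
        + ⟪-(γ u) • (Matrix.toEuclideanCLM (𝕜 := ℝ) (n := Fin N) B (f u)) + g u, f u⟫)
          * Real.exp (E u)
        + ⟪f u, f u⟫ * (Real.exp (E u) * (2 * lmin * γ u - 2 * L)) ≤ 0 := by
    intro u hu
    have hip : ⟪f u, -(γ u) • (Matrix.toEuclideanCLM (𝕜 := ℝ) (n := Fin N) B (f u)) + g u⟫
        = -(γ u) * ⟪f u, Matrix.toEuclideanCLM (𝕜 := ℝ) (n := Fin N) B (f u)⟫ + ⟪f u, g u⟫ := by
      rw [inner_add_right, real_inner_smul_right]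
    have hcomm : ⟪-(γ u) • (Matrix.toEuclideanCLM (𝕜 := ℝ) (n := Fin N) B (f u)) + g u, f u⟫
        = ⟪f u, -(γ u) • (Matrix.toEuclideanCLM (𝕜 := ℝ) (n := Fin N) B (f u)) + g u⟫ :=
      real_inner_comm _ _
    have hray := rayleigh' hB hmin_le (f u)
    have hfg : ⟪f u, g u⟫ ≤ L * ‖f u‖ ^ 2 := by
      calc ⟪f u, g u⟫ ≤ ‖f u‖ * ‖g u‖ := real_inner_le_norm _ _
        _ ≤ ‖f u‖ * (L * ‖f u‖) :=
            mul_le_mul_of_nonneg_left (hg u hu) (norm_nonneg _)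
        _ = L * ‖f u‖ ^ 2 := by ring
    have hself : ⟪f u, f u⟫ = ‖f u‖ ^ 2 := real_inner_self_eq_norm_sq _
    have hexp := Real.exp_pos (E u)
    have hγu := hγ0 u
    rw [hcomm, hip, hself]
    nlinarith [mul_le_mul_of_nonneg_left hray hγu, sq_nonneg (‖f u‖)]
  have hABt : A ≤ Bt := le_trans ht.1 ht.2
  have hanti : AntitoneOn ψ (Set.Icc A Bt) := by
    apply antitoneOn_of_deriv_nonpos (convex_Icc A Bt)
    · exact fun u hu => ((hψ u hu).continuousAt).continuousWithinAt
    · intro u hu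
      rw [interior_Icc] at hu
      exact ((hψ u (Set.mem_Icc_of_Ioo hu)).differentiableAt).differentiableWithinAt
    · intro u hu
      rw [interior_Icc] at hu
      rw [(hψ u (Set.mem_Icc_of_Ioo hu)).deriv]
      exact hder_le u (Set.mem_Icc_of_Ioo hu)
  have hAmem : A ∈ Set.Icc A Bt := ⟨le_refl _, hABt⟩
  have hle := hanti hAmem ht ht.1
  have hGA : G A = 0 := intervalIntegral.integral_same
  have hEA : E A = 0 := by simp [hEdef, hGA]
  have hψA : ψ A = ‖f A‖ ^ 2 := by
    simp only [hψdef, hEA, Real.exp_zero, mul_one, real_inner_self_eq_norm_sq]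
  have hψt : ψ t = ‖f t‖ ^ 2 * Real.exp (E t) := by
    simp only [hψdef, real_inner_self_eq_norm_sq]
  rw [hψA, hψt] at hle
  have hsq : ‖f t‖ ^ 2 ≤ (‖f A‖ * Real.exp (L * (t - A) - lmin * G t)) ^ 2 := by
    have hexp2 : (Real.exp (L * (t - A) - lmin * G t)) ^ 2 = Real.exp (-(E t)) := by
      rw [sq, ← Real.exp_add]
      congr 1
      simp only [hEdef]
      ring
    rw [mul_pow, hexp2]
    have hEpos := Real.exp_pos (E t)
    have h2 : Real.exp (-(E t)) = (Real.exp (E t))⁻¹ := Real.exp_neg _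
    rw [h2]
    have hEinv : (0:ℝ) < (Real.exp (E t))⁻¹ := inv_pos.mpr hEpos
    calc ‖f t‖ ^ 2 = ‖f t‖ ^ 2 * Real.exp (E t) * (Real.exp (E t))⁻¹ := by
          rw [mul_assoc, mul_inv_cancel₀ hEpos.ne', mul_one]
      _ ≤ ‖f A‖ ^ 2 * (Real.exp (E t))⁻¹ := mul_le_mul_of_nonneg_right hle hEinv.le
  have := Real.sqrt_le_sqrt hsq
  rwa [Real.sqrt_sq (norm_nonneg _), Real.sqrt_sq (by positivity)] at this
/-- hybrid setup.  `B` real symmetric with eigenvalues `λᵢ`, smallest one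
`λmin > 0`; intervals `[a_j, b_j]` with gaps `μ_j = a_{j+1} - b_j ∈ (0, μ*]`;
`γ : ℝ → ℝ` continuous nonnegative; `δ ∈ (0,1)`, `𝓛 > 0`; discrete gains `γd_j` with
`δ ≤ μ_j γd_j λᵢ < 1`.  Hybrid solution: on each `[a_j, b_j]`,
`ε_j'(t) = -γ(t) • (B ⬝ ε_j(t)) + g_j(t)` with `‖g_j(t)‖ ≤ 𝓛 ‖ε_j(t)‖`, and at jumps
`ε_{j+1}(a_{j+1}) = (I - μ_j γd_j • B) ⬝ ε_j(b_j) + μ_j • h_j` with `‖h_j‖ ≤ 𝓛 ‖ε_j(b_j)‖`.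
With `M = max (1-δ) e^{-λmin} ∈ (0,1)`, for every `n` and `t ∈ [a_n, b_n]`:
`‖ε_n(t)‖ ≤ ‖ε_0(a_0)‖ · exp(𝓛 M⁻¹ (∑_{j<n} (b_j - a_j) + (t - a_n)))
  · M ^ (∑_{j<n} ∫_{a_j}^{b_j} γ + ∫_{a_n}^t γ) · (M + μ* 𝓛)^n`. -/
theorem stmt11 {N : ℕ} (hN : 0 < N) (B : Matrix (Fin N) (Fin N) ℝ)
    (hB : B.IsHermitian) (lmin : ℝ)
    (hmin_le : ∀ i, lmin ≤ hB.eigenvalues i)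
    (hmin_mem : ∃ i, hB.eigenvalues i = lmin)
    (hlmin_pos : 0 < lmin)
    (a b : ℕ → ℝ) (hab : ∀ j, a j ≤ b j) (hba : ∀ j, b j < a (j + 1))
    (μ : ℕ → ℝ) (hμdef : ∀ j, μ j = a (j + 1) - b j)
    (μstar : ℝ) (hμstar : 0 < μstar) (hμle : ∀ j, μ j ≤ μstar)
    (γ : ℝ → ℝ) (hγc : Continuous γ) (hγ0 : ∀ t, 0 ≤ γ t)
    (δ : ℝ) (hδ0 : 0 < δ) (hδ1 : δ < 1)
    (L : ℝ) (hL : 0 < L)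
    (γd : ℕ → ℝ)
    (hγd : ∀ j i, δ ≤ μ j * γd j * hB.eigenvalues i ∧ μ j * γd j * hB.eigenvalues i < 1)
    (ε g : ℕ → ℝ → EuclideanSpace ℝ (Fin N))
    (hode : ∀ j, ∀ t ∈ Set.Icc (a j) (b j),
      HasDerivAt (ε j)
        (-(γ t) • (Matrix.toEuclideanCLM (𝕜 := ℝ) (n := Fin N) B (ε j t)) + g j t) t)
    (hg : ∀ j, ∀ t ∈ Set.Icc (a j) (b j), ‖g j t‖ ≤ L * ‖ε j t‖)
    (h : ℕ → EuclideanSpace ℝ (Fin N))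
    (hjump : ∀ j, ε (j + 1) (a (j + 1)) =
      Matrix.toEuclideanCLM (𝕜 := ℝ) (n := Fin N) (1 - (μ j * γd j) • B) (ε j (b j))
        + μ j • h j)
    (hh : ∀ j, ‖h j‖ ≤ L * ‖ε j (b j)‖)
    (M : ℝ) (hM : M = max (1 - δ) (Real.exp (-lmin))) :
    ∀ n, ∀ t ∈ Set.Icc (a n) (b n),
      ‖ε n t‖ ≤ ‖ε 0 (a 0)‖
        * Real.exp (L * M⁻¹ * ((∑ j ∈ Finset.range n, (b j - a j)) + (t - a n)))
        * M ^ ((∑ j ∈ Finset.range n, ∫ s in (a j)..(b j), γ s) + ∫ s in (a n)..t, γ s)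
        * (M + μstar * L) ^ n := by
  
  have hexpM : Real.exp (-lmin) ≤ M := by rw [hM]; exact le_max_right _ _
  have h1δM : 1 - δ ≤ M := by rw [hM]; exact le_max_left _ _
  have hM0 : 0 < M := lt_of_lt_of_le (Real.exp_pos _) hexpM
  have hM1 : M ≤ 1 := by
    rw [hM]
    apply max_le (by linarith)
    have : Real.exp (-lmin) < Real.exp 0 := Real.exp_lt_exp.mpr (by linarith)
    simpa using this.le
  have hMinv : 1 ≤ M⁻¹ := by
    nlinarith [mul_inv_cancel₀ hM0.ne', inv_pos.mpr hM0]
  have hP0 : (0:ℝ) ≤ M + μstar * L := by nlinarith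
  have hbridge : ∀ X : ℝ, 0 ≤ X → Real.exp (-(lmin * X)) ≤ M ^ X := by
    intro X hX
    have h1 : Real.exp (-lmin) ^ X = Real.exp (-lmin * X) := by
      rw [Real.rpow_def_of_pos (Real.exp_pos _), Real.log_exp]
    have h2 : Real.exp (-lmin) ^ X ≤ M ^ X :=
      Real.rpow_le_rpow (Real.exp_pos _).le hexpM hX
    rw [show -(lmin * X) = -lmin * X by ring, ← h1]
    exact h2
  have hglue : ∀ (n : ℕ) (C : ℝ), 0 ≤ C → ‖ε n (a n)‖ ≤ C →
      ∀ t ∈ Set.Icc (a n) (b n),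
      ‖ε n t‖ ≤ C * Real.exp (L * M⁻¹ * (t - a n)) * M ^ (∫ s in (a n)..t, γ s) := by
    intro n C hC0 hC t ht
    have hcore := gronwall_core hB hmin_le hγc hγ0 (ε n) (g n) (a n) (b n) (hode n) (hg n) t ht
    have hX0 : 0 ≤ ∫ s in (a n)..t, γ s :=
      intervalIntegral.integral_nonneg ht.1 (fun s _ => hγ0 s)
    have hsplit : Real.exp (L * (t - a n) - lmin * ∫ s in (a n)..t, γ s)
        = Real.exp (L * (t - a n)) * Real.exp (-(lmin * ∫ s in (a n)..t, γ s)) := by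
      rw [← Real.exp_add]; ring_nf
    have he1 : Real.exp (L * (t - a n)) ≤ Real.exp (L * M⁻¹ * (t - a n)) := by
      apply Real.exp_le_exp.mpr
      have ht0 : 0 ≤ t - a n := by linarith [ht.1]
      nlinarith [mul_nonneg (mul_nonneg hL.le ht0) (sub_nonneg.mpr hMinv)]
    have he2 := hbridge _ hX0
    calc ‖ε n t‖
        ≤ ‖ε n (a n)‖ * Real.exp (L * (t - a n) - lmin * ∫ s in (a n)..t, γ s) := hcore
      _ ≤ C * (Real.exp (L * M⁻¹ * (t - a n)) * M ^ (∫ s in (a n)..t, γ s)) := by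
          rw [hsplit]
          have hmm : Real.exp (L * (t - a n)) * Real.exp (-(lmin * ∫ s in (a n)..t, γ s))
              ≤ Real.exp (L * M⁻¹ * (t - a n)) * M ^ (∫ s in (a n)..t, γ s) :=
            mul_le_mul he1 he2 (Real.exp_pos _).le (Real.exp_pos _).le
          exact mul_le_mul hC hmm (by positivity) hC0
      _ = C * Real.exp (L * M⁻¹ * (t - a n)) * M ^ (∫ s in (a n)..t, γ s) := by ring
  have hμpos : ∀ j, 0 < μ j := fun j => by rw [hμdef j]; linarith [hba j]
  have hjumpest : ∀ n, ‖ε (n+1) (a (n+1))‖ ≤ (M + μstar * L) * ‖ε n (b n)‖ := by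
    intro n
    rw [hjump n]
    calc ‖Matrix.toEuclideanCLM (𝕜 := ℝ) (n := Fin N) (1 - (μ n * γd n) • B) (ε n (b n))
          + μ n • h n‖
        ≤ ‖Matrix.toEuclideanCLM (𝕜 := ℝ) (n := Fin N) (1 - (μ n * γd n) • B) (ε n (b n))‖
          + ‖μ n • h n‖ := norm_add_le _ _
      _ ≤ (1 - δ) * ‖ε n (b n)‖ + μ n * ‖h n‖ := by
          apply add_le_add (jump_op hB hδ1 (hγd n) _)
          rw [norm_smul, Real.norm_eq_abs, abs_of_pos (hμpos n)]
      _ ≤ M * ‖ε n (b n)‖ + μstar * (L * ‖ε n (b n)‖) := by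
          apply add_le_add (mul_le_mul_of_nonneg_right h1δM (norm_nonneg _))
          exact mul_le_mul (hμle n) (hh n) (norm_nonneg _) hμstar.le
      _ = (M + μstar * L) * ‖ε n (b n)‖ := by ring
  have hCnn : ∀ n : ℕ, (0:ℝ) ≤ ‖ε 0 (a 0)‖
      * Real.exp (L * M⁻¹ * (∑ j ∈ Finset.range n, (b j - a j)))
      * M ^ (∑ j ∈ Finset.range n, ∫ s in (a j)..(b j), γ s) * (M + μstar * L) ^ n := by
    intro n
    exact mul_nonneg (mul_nonneg (mul_nonneg (norm_nonneg _) (Real.exp_pos _).le)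
      (Real.rpow_nonneg hM0.le _)) (pow_nonneg hP0 n)
  have main : ∀ n, ‖ε n (a n)‖ ≤ ‖ε 0 (a 0)‖
      * Real.exp (L * M⁻¹ * (∑ j ∈ Finset.range n, (b j - a j)))
      * M ^ (∑ j ∈ Finset.range n, ∫ s in (a j)..(b j), γ s) * (M + μstar * L) ^ n := by
    intro n
    induction n with
    | zero => simp
    | succ n ih =>
      have hbn : b n ∈ Set.Icc (a n) (b n) := ⟨hab n, le_refl _⟩
      have hstep := hglue n _ (hCnn n) ih (b n) hbn
      calc ‖ε (n+1) (a (n+1))‖ ≤ (M + μstar * L) * ‖ε n (b n)‖ := hjumpest n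
        _ ≤ (M + μstar * L) * (‖ε 0 (a 0)‖
            * Real.exp (L * M⁻¹ * (∑ j ∈ Finset.range n, (b j - a j)))
            * M ^ (∑ j ∈ Finset.range n, ∫ s in (a j)..(b j), γ s) * (M + μstar * L) ^ n
            * Real.exp (L * M⁻¹ * (b n - a n)) * M ^ (∫ s in (a n)..(b n), γ s)) :=
          mul_le_mul_of_nonneg_left hstep hP0
        _ = ‖ε 0 (a 0)‖
            * Real.exp (L * M⁻¹ * (∑ j ∈ Finset.range (n+1), (b j - a j)))
            * M ^ (∑ j ∈ Finset.range (n+1), ∫ s in (a j)..(b j), γ s)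
            * (M + μstar * L) ^ (n+1) := by
          rw [Finset.sum_range_succ, Finset.sum_range_succ, Real.rpow_add hM0,
            mul_add (L * M⁻¹), Real.exp_add, pow_succ]
          ring
  intro n t ht
  have hfin := hglue n _ (hCnn n) (main n) t ht
  have heq : ‖ε 0 (a 0)‖
        * Real.exp (L * M⁻¹ * ((∑ j ∈ Finset.range n, (b j - a j)) + (t - a n)))
        * M ^ ((∑ j ∈ Finset.range n, ∫ s in (a j)..(b j), γ s) + ∫ s in (a n)..t, γ s)
        * (M + μstar * L) ^ n
      = ‖ε 0 (a 0)‖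
        * Real.exp (L * M⁻¹ * (∑ j ∈ Finset.range n, (b j - a j)))
        * M ^ (∑ j ∈ Finset.range n, ∫ s in (a j)..(b j), γ s) * (M + μstar * L) ^ n
        * Real.exp (L * M⁻¹ * (t - a n)) * M ^ (∫ s in (a n)..t, γ s) := by
    rw [Real.rpow_add hM0, mul_add (L * M⁻¹), Real.exp_add]
    ring
  rw [heq]
  exact hfin
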